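/- Consider best-first search on a finite directed graph from start s to goal g that maintains an open list O (initialized to {s}) and a closed list C, and at each step expands a vertex of O minimizing the true cost-to-go Q* (moving it to C and adding its successors not in C ∪ O to O). If Q*(s) < ∞, then the search adds g to the open list after expanding at most Q*(s) vertices, each lying on some shortest path from s to g. -/

import Mathlib

/-- `Steps E n a b` : there is a path of exactly `n` edges from `a` to `b`. -/
def Steps {V : Type*} (E : V → V → Prop) : ℕ → V → V → Prop
  | 0, a, b => a = b
  | n + 1, a, b => ∃ c, E a c ∧ Steps E n c b

/-- shortest-path distance (number of edges) from `a` to `b`, `⊤` if unreachable. -/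
noncomputable def SPDist {V : Type*} (E : V → V → Prop) (a b : V) : ℕ∞ :=
  sInf {m : ℕ∞ | ∃ n : ℕ, Steps E n a b ∧ m = (n : ℕ∞)}


lemma steps_trans {V : Type*} {E : V → V → Prop} :
    ∀ {m k : ℕ} {a b c : V}, Steps E m a b → Steps E k b c → Steps E (m + k) a c := by
  intro m
  induction m with
  | zero => intro k a b c h1 h2; cases h1; simpa using h2
  | succ m ih =>
      rintro k a b c ⟨d, hd, h1⟩ h2
      have : m + 1 + k = (m + k) + 1 := by omega
      rw [this]
      exact ⟨d, hd, ih h1 h2⟩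

lemma spdist_le {V : Type*} {E : V → V → Prop} {a b : V} {k : ℕ}
    (h : Steps E k a b) : SPDist E a b ≤ (k : ℕ∞) :=
  sInf_le ⟨k, h, rfl⟩

lemma spdist_attain {V : Type*} {E : V → V → Prop} {a b : V} {k : ℕ}
    (h : SPDist E a b = (k : ℕ∞)) : Steps E k a b := by
  classical
  set T := {m : ℕ | Steps E m a b} with hT
  have hTne : T.Nonempty := by
    by_contra hne
    have hempty : {m : ℕ∞ | ∃ n : ℕ, Steps E n a b ∧ m = (n : ℕ∞)} = ∅ := by
      ext x
      simp only [Set.mem_setOf_eq, Set.mem_empty_iff_false, iff_false, not_exists]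
      intro n hn
      exact absurd ⟨n, hn.1⟩ hne
    rw [SPDist, hempty, sInf_empty] at h
    exact (ENat.top_ne_coe k) h
  have h1 : SPDist E a b ≤ ((sInf T : ℕ) : ℕ∞) :=
    sInf_le ⟨sInf T, Nat.sInf_mem hTne, rfl⟩
  have h2 : ((sInf T : ℕ) : ℕ∞) ≤ SPDist E a b := by
    apply le_sInf
    rintro m ⟨n, hn, rfl⟩
    exact_mod_cast Nat.sInf_le (show n ∈ T from hn)
  have hk : k = sInf T := by
    rw [h] at h1 h2
    exact_mod_cast (le_antisymm h2 h1).symm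
  rw [hk]
  exact Nat.sInf_mem hTne

/-- Best-first search guided by the true cost-to-go `Q*` adds the goal to the open list
after at most `Q*(s)` expansions, each expanded vertex lying on a shortest `s`-`g` path. -/
theorem bestfirst_with_true_cost_to_go {V : Type*} [Fintype V] [DecidableEq V]
    (E : V → V → Prop) [DecidableRel E] (s g : V)
    (O C : ℕ → Finset V) (ex : ℕ → V)
    (hO0 : O 0 = {s}) (hC0 : C 0 = ∅)
    (hstep : ∀ t, g ∉ O t → (O t).Nonempty →
      ex t ∈ O t ∧ (∀ v ∈ O t, SPDist E (ex t) g ≤ SPDist E v g) ∧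
      C (t + 1) = insert (ex t) (C t) ∧
      O (t + 1) = ((O t).erase (ex t)) ∪
        (Finset.univ.filter fun u => E (ex t) u ∧ u ∉ O t ∧ u ∉ C t))
    (n : ℕ) (hreach : SPDist E s g = (n : ℕ∞)) :
    ∃ t ≤ n, g ∈ O t ∧
      ∀ i < t, SPDist E s (ex i) + SPDist E (ex i) g = SPDist E s g := by
  classical
  have main : ∀ t, t ≤ n →
      (∃ t' ≤ t, g ∈ O t' ∧
        ∀ i < t', SPDist E s (ex i) + SPDist E (ex i) g = SPDist E s g) ∨
      ((∀ v ∈ O t, ∃ k ≤ t, Steps E k s v) ∧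
       (∀ v ∈ C t, SPDist E s v < (t : ℕ∞)) ∧
       (∃ v ∈ O t, SPDist E s v = (t : ℕ∞) ∧ Steps E (n - t) v g) ∧
       (∀ i < t, SPDist E s (ex i) + SPDist E (ex i) g = SPDist E s g)) := by
    intro t
    induction t with
    | zero =>
        intro _
        right
        have hss : Steps E 0 s s := rfl
        refine ⟨?_, ?_, ?_, ?_⟩
        · intro v hv
          rw [hO0, Finset.mem_singleton] at hv
          exact ⟨0, le_rfl, hv ▸ hss⟩
        · intro v hv; rw [hC0] at hv; exact absurd hv (Finset.notMem_empty v)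
        · refine ⟨s, by rw [hO0]; exact Finset.mem_singleton_self s, ?_, ?_⟩
          · exact le_antisymm (by simpa using spdist_le hss) zero_le
          · simpa using spdist_attain hreach
        · intro i hi; omega
    | succ t ih =>
        intro ht1
        have ht : t ≤ n := by omega
        rcases ih ht with ⟨t', htt, hgt, hprop⟩ | ⟨inv1, inv2, inv3, inv4⟩
        · exact Or.inl ⟨t', by omega, hgt, hprop⟩
        by_cases hgO : g ∈ O t
        · exact Or.inl ⟨t, by omega, hgO, inv4⟩
        obtain ⟨v, hvO, hsv, hvg⟩ := inv3
        obtain ⟨hex, hmin, hC, hO⟩ := hstep t hgO ⟨v, hvO⟩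
        obtain ⟨k, hkt, hks⟩ := inv1 (ex t) hex
        have hb : SPDist E (ex t) g ≤ ((n - t : ℕ) : ℕ∞) :=
          le_trans (hmin v hvO) (spdist_le hvg)
        have ha : SPDist E s (ex t) ≤ (t : ℕ∞) :=
          le_trans (spdist_le hks) (by exact_mod_cast hkt)
        obtain ⟨k1, ha1, hk1⟩ := (WithTop.le_coe_iff).mp ha
        obtain ⟨k2, hb1, hk2⟩ := (WithTop.le_coe_iff).mp hb
        have htri : (n : ℕ∞) ≤ (k1 : ℕ∞) + (k2 : ℕ∞) := by
          rw [← hreach]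
          exact_mod_cast spdist_le (steps_trans (spdist_attain ha1) (spdist_attain hb1))
        have hsum : n ≤ k1 + k2 := by exact_mod_cast htri
        have htn : t < n := by
          rcases Nat.lt_or_ge t n with h | h
          · exact h
          · have hnt : n - t = 0 := by omega
            rw [hnt] at hvg
            have : v = g := hvg
            exact absurd (this ▸ hvO) hgO
        have hk1t : k1 = t := by omega
        have hk2t : k2 = n - t := by omega
        have heq_t : SPDist E s (ex t) + SPDist E (ex t) g = SPDist E s g := by
          rw [ha1, hb1, hreach, hk1t, hk2t]
          exact congrArg WithTop.some (by omega : t + (n - t) = n)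
        have hsext : SPDist E s (ex t) = (t : ℕ∞) := by rw [ha1, hk1t]; exact_mod_cast rfl
        -- successor on the shortest path
        have hnt : n - t = (n - (t + 1)) + 1 := by omega
        have hstepsg : Steps E ((n - (t + 1)) + 1) (ex t) g := by
          have := spdist_attain hb1
          rw [hk2t, hnt] at this
          exact this
        obtain ⟨c, hEc, hcg⟩ := hstepsg
        have hsteps_ext : Steps E t s (ex t) := by
          have := spdist_attain ha1
          rwa [hk1t] at this
        have hks' : Steps E (t + 1) s c :=
          steps_trans hsteps_ext ⟨c, hEc, rfl⟩
        have hsc_le : SPDist E s c ≤ ((t + 1 : ℕ) : ℕ∞) := spdist_le hks'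
        have hcg_le : SPDist E c g ≤ ((n - (t + 1) : ℕ) : ℕ∞) := spdist_le hcg
        obtain ⟨k3, hc1, hk3⟩ := (WithTop.le_coe_iff).mp hsc_le
        obtain ⟨k4, hc2, hk4⟩ := (WithTop.le_coe_iff).mp hcg_le
        have htri2 : (n : ℕ∞) ≤ (k3 : ℕ∞) + (k4 : ℕ∞) := by
          rw [← hreach]
          exact_mod_cast spdist_le (steps_trans (spdist_attain hc1) (spdist_attain hc2))
        have hsum2 : n ≤ k3 + k4 := by exact_mod_cast htri2
        have hk3t : k3 = t + 1 := by omega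
        have hsc : SPDist E s c = ((t + 1 : ℕ) : ℕ∞) := by rw [hc1, hk3t]; exact_mod_cast rfl
        have hcne : c ≠ ex t := by
          intro h
          rw [h, hsext] at hsc
          have : (t : ℕ) = t + 1 := by exact_mod_cast hsc
          omega
        have hcO : c ∈ O (t + 1) := by
          rw [hO]
          by_cases hcOt : c ∈ O t
          · exact Finset.mem_union_left _ (Finset.mem_erase.mpr ⟨hcne, hcOt⟩)
          · refine Finset.mem_union_right _
              (Finset.mem_filter.mpr ⟨Finset.mem_univ c, hEc, hcOt, ?_⟩)
            intro hcC
            have h2 := inv2 c hcC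
            rw [hsc] at h2
            have : (t + 1 : ℕ) < t := by exact_mod_cast h2
            omega
        right
        refine ⟨?_, ?_, ⟨c, hcO, hsc, hcg⟩, ?_⟩
        · intro u hu
          rw [hO] at hu
          rcases Finset.mem_union.mp hu with hu | hu
          · obtain ⟨k', hk', hks''⟩ := inv1 u (Finset.mem_of_mem_erase hu)
            exact ⟨k', by omega, hks''⟩
          · obtain ⟨-, hEu, -, -⟩ := Finset.mem_filter.mp hu
            exact ⟨t + 1, le_rfl, steps_trans hsteps_ext ⟨u, hEu, rfl⟩⟩
        · intro u hu
          rw [hC] at hu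
          rcases Finset.mem_insert.mp hu with hu | hu
          · rw [hu, hsext]
            exact_mod_cast Nat.lt_succ_self t
          · exact lt_trans (inv2 u hu) (by exact_mod_cast Nat.lt_succ_self t)
        · intro i hi
          rcases Nat.lt_succ_iff_lt_or_eq.mp hi with h | h
          · exact inv4 i h
          · rw [h]; exact heq_t
  rcases main n le_rfl with ⟨t, htn, hgt, hp⟩ | ⟨-, -, ⟨v, hvO, -, hvg⟩, inv4⟩
  · exact ⟨t, htn, hgt, hp⟩
  · have h0 : Steps E 0 v g := by rwa [Nat.sub_self] at hvg
    have hveq : v = g := h0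
    exact ⟨n, le_rfl, hveq ▸ hvO, inv4⟩
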